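/- Let n ≥ 1 and let c_1, …, c_n be complex numbers. Suppose every value occurring among c_1, …, c_n occurs at least twice, and the c_i are not all equal. Then the polynomial h(θ) = ∑_{i=1}^n ∏_{j≠i} (θ + c_j) has at least one root α ∈ ℂ that is not a root of k(θ) = ∏_{i=1}^n (θ + c_i); equivalently, the maximum likelihood degree n + l - m - 1 (where l is the number of distinct values and m = n) is at least 1. -/

import Mathlib

open Polynomial
open scoped Classical

private lemma fgm_derivative_finset_prod {ι : Type*} [DecidableEq ι] (s : Finset ι) (f : ι → ℂ[X]) :
    derivative (∏ i ∈ s, f i) = ∑ i ∈ s, (∏ j ∈ s.erase i, f j) * derivative (f i) := by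
  induction s using Finset.induction_on with
  | empty => simp
  | @insert a s ha ih =>
    rw [Finset.prod_insert ha, derivative_mul, ih, Finset.sum_insert ha, Finset.erase_insert ha,
      Finset.mul_sum]
    congr 1
    · ring
    · refine Finset.sum_congr rfl fun i hi => ?_
      have hne : a ≠ i := fun h => ha (h ▸ hi)
      rw [Finset.erase_insert_of_ne hne,
        Finset.prod_insert (fun h => ha (Finset.mem_of_mem_erase h)), mul_assoc]

/-- If every value among the `c i` occurs at least twice and the `c i` are not all
equal, then `h` has a root which is not a root of `k`; equivalently, the ML-degree
is at least `1`. -/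
theorem fgm_ml_degree_pos (n : ℕ) (hn : 1 ≤ n) (c : Fin n → ℂ)
    (hrep : ∀ i : Fin n, ∃ j : Fin n, j ≠ i ∧ c j = c i)
    (hnotall : ∃ i j : Fin n, c i ≠ c j) :
    (∃ α : ℂ,
        (∑ i : Fin n, ∏ j ∈ Finset.univ.erase i, (X + C (c j))).eval α = 0 ∧
        (∏ i : Fin n, (X + C (c i))).eval α ≠ 0) ∧
    1 ≤ (Multiset.filter
        (fun α => (∏ i : Fin n, (X + C (c i))).eval α ≠ 0)
        (∑ i : Fin n, ∏ j ∈ Finset.univ.erase i, (X + C (c j))).roots).card := by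
  classical
  set k : ℂ[X] := ∏ i : Fin n, (X + C (c i)) with hk
  have hderiv : (∑ i : Fin n, ∏ j ∈ Finset.univ.erase i, (X + C (c j))) = derivative k := by
    rw [hk, fgm_derivative_finset_prod]; simp
  rw [hderiv]
  have hkmonic : k.Monic := monic_prod_of_monic _ _ fun i _ => monic_X_add_C _
  have hk0 : k ≠ 0 := hkmonic.ne_zero
  have hkdeg : k.natDegree = n := by
    rw [hk, natDegree_prod _ _ fun i _ => (monic_X_add_C (c i)).ne_zero]
    simp
  obtain ⟨i0, j0, hij⟩ := hnotall
  have hn2 : 2 ≤ n := by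
    have : i0 ≠ j0 := fun h => hij (by rw [h])
    have := Fintype.one_lt_card_iff.mpr ⟨i0, j0, this⟩
    exact (by simpa using this : 1 < n)
  -- degree of derivative
  have hddeg : (derivative k).natDegree = n - 1 := by
    apply natDegree_eq_of_degree_eq_some
    rw [degree_derivative_eq k (by omega), hkdeg]
  have hd0 : derivative k ≠ 0 := by
    intro h
    rw [h, natDegree_zero] at hddeg
    omega
  have hdroots : (derivative k).roots.card = n - 1 := by
    rw [(splits_iff_card_roots (f := derivative k)).mp (IsAlgClosed.splits _), hddeg]
  have hkroots : k.roots.card = n := by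
    rw [(splits_iff_card_roots (f := k)).mp (IsAlgClosed.splits _), hkdeg]
  set S : Finset ℂ := k.roots.toFinset with hS
  -- every root of k has multiplicity ≥ 2
  have hmult : ∀ a ∈ S, 2 ≤ k.rootMultiplicity a := by
    intro a ha
    rw [hS, Multiset.mem_toFinset, mem_roots hk0] at ha
    have : ∃ i : Fin n, a = -c i := by
      have := ha
      rw [IsRoot, hk, eval_prod, Finset.prod_eq_zero_iff] at this
      obtain ⟨i, _, hi⟩ := this
      simp only [eval_add, eval_X, eval_C] at hi
      exact ⟨i, by linear_combination hi⟩
    obtain ⟨i, rfl⟩ := this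
    obtain ⟨j, hji, hcj⟩ := hrep i
    rw [le_rootMultiplicity_iff hk0]
    have hfac : X - C (-c i) = X + C (c i) := by rw [map_neg, sub_neg_eq_add]
    rw [hfac]
    have h1 : k = (X + C (c i)) * ∏ t ∈ Finset.univ.erase i, (X + C (c t)) := by
      rw [hk, ← Finset.mul_prod_erase _ _ (Finset.mem_univ i)]
    have h2 : (∏ t ∈ Finset.univ.erase i, (X + C (c t))) =
        (X + C (c j)) * ∏ t ∈ (Finset.univ.erase i).erase j, (X + C (c t)) := by
      rw [← Finset.mul_prod_erase _ _ (Finset.mem_erase.mpr ⟨hji, Finset.mem_univ j⟩)]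
    rw [h1, h2, hcj]
    ring_nf
    exact ⟨∏ t ∈ (Finset.univ.erase i).erase j, (X + C (c t)), by ring⟩
  have hScard : 2 ≤ S.card := by
    have hmem : ∀ i : Fin n, -c i ∈ S := by
      intro i
      rw [hS, Multiset.mem_toFinset, mem_roots hk0]
      rw [IsRoot, hk, eval_prod]
      exact Finset.prod_eq_zero (Finset.mem_univ i) (by simp)
    exact Finset.one_lt_card.mpr ⟨-c i0, hmem i0, -c j0, hmem j0, by
      simpa [neg_inj] using hij⟩
  -- card of roots of derivative that are roots of k
  set A : Multiset ℂ := (derivative k).roots.filter (fun α => eval α k = 0) with hA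
  set B : Multiset ℂ := (derivative k).roots.filter (fun α => ¬ eval α k = 0) with hB
  have hAB : A.card + B.card = n - 1 := by
    rw [← Multiset.card_add, hA, hB, Multiset.filter_add_not, hdroots]
  have hAcount : ∀ a ∈ S, A.count a = k.rootMultiplicity a - 1 := by
    intro a ha
    have ha' : eval a k = 0 := by
      rw [hS, Multiset.mem_toFinset, mem_roots hk0] at ha; exact ha
    rw [hA, Multiset.count_filter, if_pos ha', count_roots,
      derivative_rootMultiplicity_of_root ha']
  have hAsub : A.toFinset ⊆ S := by
    intro a ha
    rw [Multiset.mem_toFinset, hA, Multiset.mem_filter] at ha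
    rw [hS, Multiset.mem_toFinset, mem_roots hk0]
    exact ha.2
  have hAcard : A.card = ∑ a ∈ S, (k.rootMultiplicity a - 1) := by
    rw [← Multiset.toFinset_sum_count_eq A]
    rw [Finset.sum_subset hAsub (fun a _ ha => Multiset.count_eq_zero.mpr
      (fun h => ha (Multiset.mem_toFinset.mpr h)))]
    exact Finset.sum_congr rfl hAcount
  have hSum : ∑ a ∈ S, k.rootMultiplicity a = n := by
    rw [← hkroots, ← Multiset.toFinset_sum_count_eq k.roots]
    exact Finset.sum_congr rfl fun a _ => (count_roots k).symm
  have hAval : A.card + S.card = n := by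
    have hS1 : S.card = ∑ _a ∈ S, 1 := by simp
    rw [hAcard, hS1, ← Finset.sum_add_distrib, ← hSum]
    refine Finset.sum_congr rfl fun a ha => ?_
    have := hmult a ha
    omega
  have hBpos : 1 ≤ B.card := by omega
  constructor
  · obtain ⟨α, hα⟩ := Multiset.card_pos_iff_exists_mem.mp (show 0 < Multiset.card B by omega)
    rw [hB, Multiset.mem_filter, mem_roots hd0] at hα
    exact ⟨α, hα.1, hα.2⟩
  · show 1 ≤ Multiset.card B
    exact hBpos
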